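/- A torsion-free group containing a cyclic subgroup of finite index is itself cyclic. -/

import Mathlib

/-- A torsion-free group containing a cyclic subgroup of finite index is itself
cyclic. -/
theorem isCyclic_of_torsionFree_finiteIndex_cyclic
    {G : Type*} [Group G]
    (htf : ∀ g : G, g ≠ 1 → ¬ IsOfFinOrder g)
    (H : Subgroup G) (hH : IsCyclic H) (hfi : H.FiniteIndex) :
    IsCyclic G := by
  classical
  -- pass to the normal core
  set N : Subgroup G := H.normalCore with hNdef
  haveI : N.Normal := Subgroup.normalCore_normal H
  haveI : N.FiniteIndex := Subgroup.finiteIndex_normalCore H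
  have hNc : IsCyclic N := by
    haveI := hH
    exact isCyclic_of_surjective _ (Subgroup.subgroupOfEquivOfLe (Subgroup.normalCore_le H)).surjective
  obtain ⟨⟨n, hnN⟩, hgen⟩ := hNc.exists_generator
  by_cases hn1 : n = 1
  · -- N is trivial, so G is finite, hence trivial by torsion-freeness
    have hfin : Finite G := by
      have hbot : N ≤ ⊥ := by
        intro x hx
        obtain ⟨m, hm⟩ := hgen ⟨x, hx⟩
        have : x = n ^ m := by
          have := congrArg (Subtype.val) hm
          simpa using this.symm
        simp [this, hn1]
      haveI : (⊥ : Subgroup G).FiniteIndex := Subgroup.finiteIndex_of_le hbot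
      have : Nat.card G ≠ 0 := by
        have := Subgroup.FiniteIndex.index_ne_zero (H := (⊥ : Subgroup G))
        rwa [Subgroup.index_bot] at this
      exact Nat.finite_of_card_ne_zero this
    haveI : Subsingleton G := by
      constructor
      intro a b
      have ha : a = 1 := by
        by_contra h
        exact htf a h (isOfFinOrder_of_finite a)
      have hb : b = 1 := by
        by_contra h
        exact htf b h (isOfFinOrder_of_finite b)
      rw [ha, hb]
    infer_instance
  · -- n has infinite order
    have hinf : ¬ IsOfFinOrder n := htf n hn1
    have hzinj : Function.Injective fun m : ℤ => n ^ m :=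
      injective_zpow_iff_not_isOfFinOrder.mpr hinf
    -- every g commutes with n
    have hcomm : ∀ g : G, Commute g n := by
      intro g
      have hmem : g * n * g⁻¹ ∈ N := (Subgroup.Normal.conj_mem ‹N.Normal› n hnN g)
      obtain ⟨m, hm⟩ := hgen ⟨g * n * g⁻¹, hmem⟩
      have hm' : g * n * g⁻¹ = n ^ m := by
        have := congrArg (Subtype.val) hm
        simpa [SubmonoidClass.coe_pow] using this.symm
      have hmem2 : g⁻¹ * n * g ∈ N := by
        have := Subgroup.Normal.conj_mem ‹N.Normal› n hnN g⁻¹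
        simpa using this
      obtain ⟨l, hl⟩ := hgen ⟨g⁻¹ * n * g, hmem2⟩
      have hl' : g⁻¹ * n * g = n ^ l := by
        have := congrArg (Subtype.val) hl
        simpa [SubmonoidClass.coe_pow] using this.symm
      -- n = (g⁻¹ * (g n g⁻¹) * g) = n ^ (l * m)
      have key : n = n ^ (l * m) := by
        have hconj : (g⁻¹ * n * g) ^ m = g⁻¹ * (n ^ m) * g := by
          have := conj_zpow (i := m) (a := g⁻¹) (b := n)
          simpa using this
        calc n = g⁻¹ * (g * n * g⁻¹) * g := by group
          _ = g⁻¹ * (n ^ m) * g := by rw [hm']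
          _ = (g⁻¹ * n * g) ^ m := hconj.symm
          _ = (n ^ l) ^ m := by rw [hl']
          _ = n ^ (l * m) := by rw [← zpow_mul]
      have hlm : l * m = 1 := by
        have := hzinj (a₁ := 1) (a₂ := l * m) (by simpa using key)
        exact this.symm
      have hm1 : m = 1 ∨ m = -1 :=
        Int.isUnit_iff.mp (IsUnit.of_mul_eq_one (a := m) l (by rw [mul_comm]; exact hlm))
      rcases hm1 with h | h
      · rw [h, zpow_one] at hm'
        exact mul_inv_eq_iff_eq_mul.mp hm'
      · -- conjugation inverts n; use g ^ index ∈ N to force g = 1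
        rw [h] at hm'
        have hk : g ^ N.index ∈ N := Subgroup.pow_index_mem N g
        obtain ⟨j, hj⟩ := hgen ⟨g ^ N.index, hk⟩
        have hj' : g ^ N.index = n ^ j := by
          have := congrArg (Subtype.val) hj
          simpa [SubmonoidClass.coe_pow] using this.symm
        have hconj : g * (n ^ j) * g⁻¹ = n ^ (-j) := by
          rw [← conj_zpow, hm', ← zpow_mul]
          congr 1
          ring
        have hgk : g * (g ^ N.index) * g⁻¹ = g ^ N.index := by group
        rw [hj'] at hgk
        rw [hgk] at hconj
        have : j = -j := hzinj hconj
        have hj0 : j = 0 := by omega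
        rw [hj0] at hj'
        simp at hj'
        have hg1 : g = 1 := by
          by_contra hg
          exact htf g hg (isOfFinOrder_iff_pow_eq_one.mpr
            ⟨N.index, Nat.pos_of_ne_zero Subgroup.FiniteIndex.index_ne_zero, hj'⟩)
        simp [hg1]
    -- N is contained in the center
    have hcenter : N ≤ Subgroup.center G := by
      intro x hx
      obtain ⟨m, hmx⟩ := hgen ⟨x, hx⟩
      have hx' : x = n ^ m := by
        have := congrArg (Subtype.val) hmx
        simpa [SubmonoidClass.coe_pow] using this.symm
      rw [Subgroup.mem_center_iff]
      intro g
      rw [hx']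
      exact ((hcomm g).zpow_right m).eq
    haveI : (Subgroup.center G).FiniteIndex := Subgroup.finiteIndex_of_le hcenter
    -- transfer map: G →* center G, g ↦ g ^ index, injective since torsion-free
    set k := (Subgroup.center G).index with hkdef
    have hk0 : k ≠ 0 := Subgroup.FiniteIndex.index_ne_zero
    have hinj : Function.Injective (MonoidHom.transferCenterPow G) := by
      rw [injective_iff_map_eq_one]
      intro g hg
      have : g ^ k = 1 := by
        have := congrArg Subtype.val hg
        rw [MonoidHom.transferCenterPow_apply] at this
        simpa using this
      by_contra hgne
      exact htf g hgne (isOfFinOrder_iff_pow_eq_one.mpr ⟨k, Nat.pos_of_ne_zero hk0, this⟩)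
    -- G is abelian
    have hab : ∀ a b : G, a * b = b * a := by
      intro a b
      apply hinj
      rw [map_mul, map_mul]; exact Subtype.ext (Subgroup.mem_center_iff.mp (MonoidHom.transferCenterPow G b).2 _)
    -- embed G into N via g ↦ g ^ N.index
    have hNk0 : N.index ≠ 0 := Subgroup.FiniteIndex.index_ne_zero
    let f : G →* N :=
      { toFun := fun g => ⟨g ^ N.index, Subgroup.pow_index_mem N g⟩
        map_one' := by simp
        map_mul' := by
          intro a b
          ext
          simp only [Subgroup.coe_mul]
          exact Commute.mul_pow (hab a b) N.index }
    have hfinj : Function.Injective f := by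
      rw [injective_iff_map_eq_one]
      intro g hg
      have : g ^ N.index = 1 := by
        have := congrArg Subtype.val hg
        simpa [f] using this
      by_contra hgne
      exact htf g hgne (isOfFinOrder_iff_pow_eq_one.mpr ⟨N.index, Nat.pos_of_ne_zero hNk0, this⟩)
    haveI : IsCyclic ↥f.range := Subgroup.isCyclic f.range
    exact isCyclic_of_surjective (MonoidHom.ofInjective hfinj).symm
      (MonoidHom.ofInjective hfinj).symm.surjective
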